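/- A bounded operator D on a complex Hilbert space is a derivation of the vector ternary product (D[ψ₁,ψ₂,ψ₃] = [Dψ₁,ψ₂,ψ₃] + [ψ₁,Dψ₂,ψ₃] + [ψ₁,ψ₂,Dψ₃] for all ψᵢ) if and only if D is anti-self-adjoint (D† = −D). -/

import Mathlib

noncomputable section

variable {H : Type*} [NormedAddCommGroup H] [InnerProductSpace ℂ H] [CompleteSpace H]

def otp (A B C : H →L[ℂ] H) : H →L[ℂ] H := A * (ContinuousLinearMap.adjoint B) * C

def commOp (X Y : H →L[ℂ] H) : H →L[ℂ] H := X * Y - Y * X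

def vtp {H : Type*} [NormedAddCommGroup H] [InnerProductSpace ℂ H] (a b c : H) : H :=
  (inner ℂ b c : ℂ) • a

theorem derivation_iff_antiselfadjoint [Nontrivial H] (D : H →L[ℂ] H) :
    (∀ ψ₁ ψ₂ ψ₃ : H, D (vtp ψ₁ ψ₂ ψ₃) =
        vtp (D ψ₁) ψ₂ ψ₃ + vtp ψ₁ (D ψ₂) ψ₃ + vtp ψ₁ ψ₂ (D ψ₃)) ↔
      ContinuousLinearMap.adjoint D = -D := by
  constructor
  · intro h
    ext ψ₃
    apply ext_inner_left ℂ
    intro ψ₂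
    obtain ⟨ψ₁, hψ₁⟩ := exists_ne (0 : H)
    have := h ψ₁ ψ₂ ψ₃
    simp only [vtp, map_smul] at this
    have h2 : ((inner ℂ (D ψ₂) ψ₃ : ℂ) + (inner ℂ ψ₂ (D ψ₃) : ℂ)) • ψ₁ = 0 := by
      rw [add_smul]
      linear_combination (norm := module) -this
    rw [smul_eq_zero] at h2
    rcases h2 with h2 | h2
    · have : (inner ℂ ψ₂ (ContinuousLinearMap.adjoint D ψ₃) : ℂ) = inner ℂ (D ψ₂) ψ₃ := by
        rw [ContinuousLinearMap.adjoint_inner_right]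
      rw [this]
      simp only [ContinuousLinearMap.neg_apply, inner_neg_right]
      linear_combination h2
    · exact absurd h2 hψ₁
  · intro h ψ₁ ψ₂ ψ₃
    simp only [vtp, map_smul]
    have : (inner ℂ (D ψ₂) ψ₃ : ℂ) = inner ℂ ψ₂ (ContinuousLinearMap.adjoint D ψ₃) := by
      rw [ContinuousLinearMap.adjoint_inner_right]
    rw [this, h]
    simp only [ContinuousLinearMap.neg_apply, inner_neg_right]
    module
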